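/- Assume B(z) is constant with value B and φ is a gauge function. For m, n ∈ ℕ let ψ_n(w) = w^n·e^{−B|w|²−iφ(w)} and let Ã be the creation operator (Ãf)(z) = −(∂f/∂z)(z) + conj(S(z))·f(z). Then the function Ã^m ψ_n is an eigenfunction of the magnetic Schrödinger operator with eigenvalue B(2m+1): L(Ã^m ψ_n) = B(2m+1)·(Ã^m ψ_n). -/

import Mathlib

noncomputable section

open Complex

/-- The group `G = 𝕋 ⋉ ℂ`, with elements `[a,b]`, acting on `ℂ` by `z ↦ a z + b`. -/
@[ext]
structure GT : Type where
  a : Circle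
  b : ℂ

namespace GT

instance : Group GT where
  mul g h := ⟨g.a * h.a, (g.a : ℂ) * h.b + g.b⟩
  one := ⟨1, 0⟩
  inv g := ⟨g.a⁻¹, -((g.a⁻¹ : ℂ) * g.b)⟩
  mul_assoc g h k := by
    refine GT.ext (mul_assoc _ _ _) ?_
    show ((g.a * h.a : Circle) : ℂ) * k.b + ((g.a : ℂ) * h.b + g.b)
        = (g.a : ℂ) * ((h.a : ℂ) * k.b + h.b) + g.b
    push_cast; ring
  one_mul g := by
    refine GT.ext (one_mul _) ?_
    show ((1 : Circle) : ℂ) * g.b + 0 = g.b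
    simp
  mul_one g := by
    refine GT.ext (mul_one _) ?_
    show (g.a : ℂ) * 0 + g.b = g.b
    simp
  inv_mul_cancel g := by
    refine GT.ext (inv_mul_cancel _) ?_
    show ((g.a⁻¹ : Circle) : ℂ) * g.b + -(((g.a : ℂ))⁻¹ * g.b) = 0
    push_cast; ring

/-- The action of `G` on `ℂ` : `[a,b]·z = a z + b`. -/
def act (g : GT) (z : ℂ) : ℂ := (g.a : ℂ) * z + g.b

end GT

/-- The Hermitian product `⟨z,w⟩ = z·conj w`. -/
def herm (z w : ℂ) : ℂ := z * (starRingEnd ℂ) w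

/-- The automorphic factor `j^α(g,z) = exp(2 i α Im⟨z, g⁻¹·0⟩)`. -/
def jfac (α : ℝ) (g : GT) (z : ℂ) : ℂ :=
  Complex.exp (2 * Complex.I * (α : ℂ) * ((herm z (GT.act g⁻¹ 0)).im : ℂ))

/-- The Wirtinger derivative `∂f/∂z = (1/2)(∂f/∂x − i ∂f/∂y)`. -/
def wderiv (f : ℂ → ℂ) (z : ℂ) : ℂ :=
  (1 / 2 : ℂ) * (fderiv ℝ f z 1 - Complex.I * fderiv ℝ f z Complex.I)

/-- The anti-Wirtinger derivative `∂f/∂z̄ = (1/2)(∂f/∂x + i ∂f/∂y)`. -/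
def wderivBar (f : ℂ → ℂ) (z : ℂ) : ℂ :=
  (1 / 2 : ℂ) * (fderiv ℝ f z 1 + Complex.I * fderiv ℝ f z Complex.I)

/-- The Euclidean Laplacian `Δ = 4 ∂²/∂z∂z̄`. -/
def lap (f : ℂ → ℂ) (z : ℂ) : ℂ := 4 * wderiv (fun w => wderivBar f w) z

/-- `S(z) = ν z + μ (τ(z)·∂τ̄/∂z̄(z) − τ̄(z)·∂τ/∂z̄(z))`. -/
def Sfun (ν μ : ℝ) (τ : ℂ → ℂ) (z : ℂ) : ℂ :=
  (ν : ℂ) * z + (μ : ℂ) *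
    (τ z * wderivBar (fun w => (starRingEnd ℂ) (τ w)) z - (starRingEnd ℂ) (τ z) * wderivBar τ z)

/-- `B(z) = ν + μ(|∂τ/∂z(z)|² − |∂τ/∂z̄(z)|²)`. -/
def Bfun (ν μ : ℝ) (τ : ℂ → ℂ) (z : ℂ) : ℝ :=
  ν + μ * (‖wderiv τ z‖ ^ 2 - ‖wderivBar τ z‖ ^ 2)

/-- The magnetic Schrödinger operator `L`. -/
def Lop (ν μ : ℝ) (τ : ℂ → ℂ) (f : ℂ → ℂ) (z : ℂ) : ℂ :=
  - wderiv (fun w => wderivBar f w) z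
    - (Sfun ν μ τ z * wderiv f z - (starRingEnd ℂ) (Sfun ν μ τ z) * wderivBar f z)
    + ((‖Sfun ν μ τ z‖ : ℂ)) ^ 2 * f z
    - ((μ : ℂ) / 4) *
        (τ z * lap (fun w => (starRingEnd ℂ) (τ w)) z - (starRingEnd ℂ) (τ z) * lap τ z) * f z

/-- The annihilation operator `A f = ∂f/∂z̄ + S f`. -/
def Aop (ν μ : ℝ) (τ : ℂ → ℂ) (f : ℂ → ℂ) (z : ℂ) : ℂ :=
  wderivBar f z + Sfun ν μ τ z * f z

/-- The creation operator `Ã f = −∂f/∂z + conj(S) f`. -/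
def Atop (ν μ : ℝ) (τ : ℂ → ℂ) (f : ℂ → ℂ) (z : ℂ) : ℂ :=
  - wderiv f z + (starRingEnd ℂ) (Sfun ν μ τ z) * f z

/-- `J(g,z) = j^ν(g,z)·j^μ(ρ(g),τ(z))`. -/
def Jfun (ν μ : ℝ) (ρ : GT → GT) (τ : ℂ → ℂ) (g : GT) (z : ℂ) : ℂ :=
  jfac ν g z * jfac μ (ρ g) (τ z)

/-- `φ_ρ(g,g') = Im(ν⟨g⁻¹·0,g'·0⟩ + μ⟨ρ(g⁻¹)·0, ρ(g')·0⟩)`. -/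
def phiRho (ν μ : ℝ) (ρ : GT → GT) (g g' : GT) : ℝ :=
  ((ν : ℂ) * herm (GT.act g⁻¹ 0) (GT.act g' 0)
    + (μ : ℂ) * herm (GT.act (ρ g⁻¹) 0) (GT.act (ρ g') 0)).im

/-- Membership in the lattice `Γ = ℤω₁ + ℤω₂`. -/
def inLattice (ω₁ ω₂ : ℂ) (γ : ℂ) : Prop := ∃ m n : ℤ, γ = (m : ℂ) * ω₁ + (n : ℂ) * ω₂

/-- Mixed `Γ`-automorphic form of type `(ν,μ)` w.r.t. the pair `(ρ,τ)`. -/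
def MixedForm (ν μ : ℝ) (ρ : GT → GT) (τ : ℂ → ℂ) (ω₁ ω₂ : ℂ) (F : ℂ → ℂ) : Prop :=
  ContDiff ℝ (⊤ : ℕ∞) F ∧ ∀ γ : ℂ, inLattice ω₁ ω₂ γ → ∀ z : ℂ,
    F (z + γ) = jfac (-ν) ⟨(1 : Circle), γ⟩ z * jfac (-μ) (ρ ⟨(1 : Circle), γ⟩) (τ z) * F z

/-- The Laguerre polynomial `L_k`. -/
def laguerre (k : ℕ) (x : ℝ) : ℝ :=
  ∑ j ∈ Finset.range (k + 1), (-1) ^ j * (k.choose j : ℝ) * x ^ j / (Nat.factorial j : ℝ)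


/-- The multiplier `χ_τ(γ) = exp(iφ(γ) − 2iμ Im⟨τ(0), ρ([1,γ])⁻¹·0⟩)`. -/
def chiTau (μ : ℝ) (ρ : GT → GT) (τ : ℂ → ℂ) (φ : ℂ → ℝ) (γ : ℂ) : ℂ :=
  Complex.exp (Complex.I * (φ γ : ℂ)
    - 2 * Complex.I * (μ : ℂ) * ((herm (τ 0) (GT.act (ρ ⟨1, γ⟩)⁻¹ 0)).im : ℂ))

/-- The eigenprojector kernel `K_k`. -/
def Kker (B : ℝ) (φ : ℂ → ℝ) (k : ℕ) (z w : ℂ) : ℂ :=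
  ((2 * B / Real.pi : ℝ) : ℂ) * Complex.exp (-Complex.I * ((φ z - φ w : ℝ) : ℂ)) *
    Complex.exp (2 * Complex.I * (B : ℂ) * ((herm z w).im : ℂ)) *
    Complex.exp (-((B * ‖z - w‖ ^ 2 : ℝ) : ℂ)) *
    ((laguerre k (2 * B * ‖z - w‖ ^ 2) : ℝ) : ℂ)

/-- The kernel `K^σ_ξ;k`. -/
def Kxi (σ : ℝ) (ξ : ℂ) (k : ℕ) (z w : ℂ) : ℂ :=
  ((2 * σ / Real.pi : ℝ) : ℂ) * Complex.exp (2 * Complex.I * ((herm (z - w) ξ).im : ℂ)) *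
    Complex.exp (2 * Complex.I * (σ : ℂ) * ((herm z w).im : ℂ)) *
    Complex.exp (-((σ * ‖z - w‖ ^ 2 : ℝ) : ℂ)) *
    ((laguerre k (2 * σ * ‖z - w‖ ^ 2) : ℝ) : ℂ)

/-- `m`-fold iterate of the creation operator `Ã`. -/
def AtopIter (ν μ : ℝ) (τ : ℂ → ℂ) (m : ℕ) (f : ℂ → ℂ) : ℂ → ℂ :=
  (fun u z => Atop ν μ τ u z)^[m] f


variable {f g : ℂ → ℂ} {z : ℂ} {c : ℂ}

theorem wderiv_add (hf : DifferentiableAt ℝ f z) (hg : DifferentiableAt ℝ g z) :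
    wderiv (fun w => f w + g w) z = wderiv f z + wderiv g z := by
  simp [wderiv, fderiv_fun_add hf hg]; ring

theorem wderivBar_add (hf : DifferentiableAt ℝ f z) (hg : DifferentiableAt ℝ g z) :
    wderivBar (fun w => f w + g w) z = wderivBar f z + wderivBar g z := by
  simp [wderivBar, fderiv_fun_add hf hg]; ring

theorem wderiv_const_mul (hf : DifferentiableAt ℝ f z) (c : ℂ) :
    wderiv (fun w => c * f w) z = c * wderiv f z := by
  simp [wderiv, fderiv_const_mul hf c]; ring

theorem wderivBar_const_mul (hf : DifferentiableAt ℝ f z) (c : ℂ) :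
    wderivBar (fun w => c * f w) z = c * wderivBar f z := by
  simp [wderivBar, fderiv_const_mul hf c]; ring

theorem wderiv_mul (hf : DifferentiableAt ℝ f z) (hg : DifferentiableAt ℝ g z) :
    wderiv (fun w => f w * g w) z = wderiv f z * g z + f z * wderiv g z := by
  simp [wderiv, fderiv_fun_mul hf hg]; ring

theorem wderivBar_mul (hf : DifferentiableAt ℝ f z) (hg : DifferentiableAt ℝ g z) :
    wderivBar (fun w => f w * g w) z = wderivBar f z * g z + f z * wderivBar g z := by
  simp [wderivBar, fderiv_fun_mul hf hg]; ring

theorem wderiv_const (c : ℂ) : wderiv (fun _ => c) z = 0 := by simp [wderiv]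

theorem wderivBar_const (c : ℂ) : wderivBar (fun _ => c) z = 0 := by simp [wderivBar]

theorem fderiv_conj_apply (hf : DifferentiableAt ℝ f z) (v : ℂ) :
    fderiv ℝ (fun w => (starRingEnd ℂ) (f w)) z v = (starRingEnd ℂ) (fderiv ℝ f z v) := by
  have : (fun w => (starRingEnd ℂ) (f w)) = (Complex.conjCLE : ℂ ≃L[ℝ] ℂ) ∘ f := rfl
  rw [this, ContinuousLinearEquiv.comp_fderiv]
  rfl

theorem wderiv_conj (hf : DifferentiableAt ℝ f z) :
    wderiv (fun w => (starRingEnd ℂ) (f w)) z = (starRingEnd ℂ) (wderivBar f z) := by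
  simp only [wderiv, wderivBar, fderiv_conj_apply hf, map_mul, map_add, map_sub, map_div₀,
    map_one, map_ofNat, Complex.conj_I]
  ring

theorem wderivBar_conj (hf : DifferentiableAt ℝ f z) :
    wderivBar (fun w => (starRingEnd ℂ) (f w)) z = (starRingEnd ℂ) (wderiv f z) := by
  simp only [wderiv, wderivBar, fderiv_conj_apply hf, map_mul, map_add, map_sub, map_div₀,
    map_one, map_ofNat, Complex.conj_I]
  ring

theorem wderiv_id : wderiv (fun w => w) z = 1 := by
  simp [wderiv, fderiv_id']; norm_num
theorem wderivBar_id : wderivBar (fun w => w) z = 0 := by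
  simp [wderivBar, fderiv_id', Complex.I_mul_I]

-- holomorphic
theorem fderiv_real_one_of_holo (hf : DifferentiableAt ℂ f z) :
    fderiv ℝ f z 1 = deriv f z := by
  rw [(hf.hasFDerivAt.restrictScalars ℝ).fderiv]; rfl

theorem fderiv_real_I_of_holo (hf : DifferentiableAt ℂ f z) :
    fderiv ℝ f z Complex.I = Complex.I * deriv f z := by
  rw [(hf.hasFDerivAt.restrictScalars ℝ).fderiv]
  show fderiv ℂ f z Complex.I = _
  conv_lhs => rw [show (Complex.I : ℂ) = Complex.I • (1 : ℂ) by simp, map_smul, smul_eq_mul]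
  rfl

theorem wderiv_of_holo (hf : DifferentiableAt ℂ f z) : wderiv f z = deriv f z := by
  rw [wderiv, fderiv_real_one_of_holo hf, fderiv_real_I_of_holo hf]
  ring_nf
  rw [Complex.I_sq]; ring

theorem wderivBar_of_holo (hf : DifferentiableAt ℂ f z) : wderivBar f z = 0 := by
  rw [wderivBar, fderiv_real_one_of_holo hf, fderiv_real_I_of_holo hf]
  ring_nf
  rw [Complex.I_sq]; ring

-- abbreviation for smoothness level
section Smooth
variable {f g : ℂ → ℂ} {z : ℂ}

theorem wderiv_sub (hf : DifferentiableAt ℝ f z) (hg : DifferentiableAt ℝ g z) :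
    wderiv (fun w => f w - g w) z = wderiv f z - wderiv g z := by
  simp [wderiv, fderiv_fun_sub hf hg]; ring

theorem wderivBar_sub (hf : DifferentiableAt ℝ f z) (hg : DifferentiableAt ℝ g z) :
    wderivBar (fun w => f w - g w) z = wderivBar f z - wderivBar g z := by
  simp [wderivBar, fderiv_fun_sub hf hg]; ring

theorem contDiff_fderiv_apply (hf : ContDiff ℝ (⊤ : ℕ∞) f) (v : ℂ) :
    ContDiff ℝ (⊤ : ℕ∞) (fun z => fderiv ℝ f z v) :=
  (hf.fderiv_right (m := ((⊤:ℕ∞) : WithTop ℕ∞)) (le_of_eq rfl)).clm_apply contDiff_const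

theorem contDiff_wderiv (hf : ContDiff ℝ (⊤ : ℕ∞) f) :
    ContDiff ℝ (⊤ : ℕ∞) (fun z => wderiv f z) := by
  unfold wderiv
  exact contDiff_const.mul ((contDiff_fderiv_apply hf 1).sub
    (contDiff_const.mul (contDiff_fderiv_apply hf Complex.I)))

theorem contDiff_wderivBar (hf : ContDiff ℝ (⊤ : ℕ∞) f) :
    ContDiff ℝ (⊤ : ℕ∞) (fun z => wderivBar f z) := by
  unfold wderivBar
  exact contDiff_const.mul ((contDiff_fderiv_apply hf 1).add
    (contDiff_const.mul (contDiff_fderiv_apply hf Complex.I)))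

theorem fderiv_fderiv_apply (hf : ContDiff ℝ (⊤ : ℕ∞) f) (z u v : ℂ) :
    fderiv ℝ (fun w => fderiv ℝ f w v) z u = fderiv ℝ (fderiv ℝ f) z u v := by
  rw [fderiv_clm_apply ((hf.fderiv_right (m := ((⊤:ℕ∞) : WithTop ℕ∞)) (le_of_eq rfl)).differentiable (by simp) z)
    (differentiableAt_const v)]
  simp

theorem fderiv_wderivBar_apply (hf : ContDiff ℝ (⊤ : ℕ∞) f) (z u : ℂ) :
    fderiv ℝ (fun w => wderivBar f w) z u
      = (1 / 2 : ℂ) * (fderiv ℝ (fderiv ℝ f) z u 1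
          + Complex.I * fderiv ℝ (fderiv ℝ f) z u Complex.I) := by
  have d1 : DifferentiableAt ℝ (fun w => fderiv ℝ f w 1) z :=
    (contDiff_fderiv_apply hf 1).differentiable (by simp) z
  have dI : DifferentiableAt ℝ (fun w => Complex.I * fderiv ℝ f w Complex.I) z :=
    (contDiff_const.mul (contDiff_fderiv_apply hf Complex.I)).differentiable (by simp) z
  have : (fun w => wderivBar f w) = fun w => (1 / 2 : ℂ) *
      (fderiv ℝ f w 1 + Complex.I * fderiv ℝ f w Complex.I) := rfl
  rw [this, fderiv_const_mul (d1.fun_add dI) ((1:ℂ)/2)]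
  simp only [ContinuousLinearMap.coe_smul', Pi.smul_apply, smul_eq_mul]
  rw [fderiv_fun_add d1 dI]
  simp only [ContinuousLinearMap.add_apply]
  rw [fderiv_const_mul ((contDiff_fderiv_apply hf Complex.I).differentiable (by simp) z) Complex.I]
  simp only [ContinuousLinearMap.coe_smul', Pi.smul_apply, smul_eq_mul]
  rw [fderiv_fderiv_apply hf, fderiv_fderiv_apply hf]

theorem fderiv_wderiv_apply (hf : ContDiff ℝ (⊤ : ℕ∞) f) (z u : ℂ) :
    fderiv ℝ (fun w => wderiv f w) z u
      = (1 / 2 : ℂ) * (fderiv ℝ (fderiv ℝ f) z u 1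
          - Complex.I * fderiv ℝ (fderiv ℝ f) z u Complex.I) := by
  have d1 : DifferentiableAt ℝ (fun w => fderiv ℝ f w 1) z :=
    (contDiff_fderiv_apply hf 1).differentiable (by simp) z
  have dI : DifferentiableAt ℝ (fun w => Complex.I * fderiv ℝ f w Complex.I) z :=
    (contDiff_const.mul (contDiff_fderiv_apply hf Complex.I)).differentiable (by simp) z
  have : (fun w => wderiv f w) = fun w => (1 / 2 : ℂ) *
      (fderiv ℝ f w 1 - Complex.I * fderiv ℝ f w Complex.I) := rfl
  rw [this, fderiv_const_mul (d1.fun_sub dI) ((1:ℂ)/2)]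
  simp only [ContinuousLinearMap.coe_smul', Pi.smul_apply, smul_eq_mul]
  rw [fderiv_fun_sub d1 dI]
  simp only [ContinuousLinearMap.sub_apply]
  rw [fderiv_const_mul ((contDiff_fderiv_apply hf Complex.I).differentiable (by simp) z) Complex.I]
  simp only [ContinuousLinearMap.coe_smul', Pi.smul_apply, smul_eq_mul]
  rw [fderiv_fderiv_apply hf, fderiv_fderiv_apply hf]

/-- Schwarz: mixed Wirtinger derivatives commute for smooth functions. -/
theorem wderiv_wderivBar_comm (hf : ContDiff ℝ (⊤ : ℕ∞) f) (z : ℂ) :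
    wderiv (fun w => wderivBar f w) z = wderivBar (fun w => wderiv f w) z := by
  have hsymm : ∀ v w, fderiv ℝ (fderiv ℝ f) z v w = fderiv ℝ (fderiv ℝ f) z w v := by
    have h2 : (2 : WithTop ℕ∞) ≤ ((⊤:ℕ∞) : WithTop ℕ∞) := by
      rw [show (2 : WithTop ℕ∞) = ((2:ℕ∞) : WithTop ℕ∞) by norm_cast]
      exact WithTop.coe_le_coe.mpr le_top
    exact (hf.contDiffAt (x := z)).isSymmSndFDerivAt (by simpa using h2)
  rw [wderiv, wderivBar, fderiv_wderivBar_apply hf, fderiv_wderivBar_apply hf,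
    fderiv_wderiv_apply hf, fderiv_wderiv_apply hf, hsymm 1 Complex.I]
  ring
end Smooth

section Chain
variable {f g : ℂ → ℂ} {z : ℂ}

theorem fderiv_real_of_holo (hf : DifferentiableAt ℂ f z) (v : ℂ) :
    fderiv ℝ f z v = deriv f z * v := by
  rw [(hf.hasFDerivAt.restrictScalars ℝ).fderiv]
  show fderiv ℂ f z v = _
  conv_lhs => rw [show v = v • (1 : ℂ) by simp, map_smul, smul_eq_mul]
  rw [mul_comm]; rfl

theorem fderiv_exp_comp_apply (hg : DifferentiableAt ℝ g z) (v : ℂ) :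
    fderiv ℝ (fun w => Complex.exp (g w)) z v = Complex.exp (g z) * fderiv ℝ g z v := by
  have he : DifferentiableAt ℝ Complex.exp (g z) :=
    Complex.differentiable_exp (𝕜 := ℝ) (g z)
  have hcomp : fderiv ℝ (Complex.exp ∘ g) z = (fderiv ℝ Complex.exp (g z)).comp (fderiv ℝ g z) :=
    fderiv_comp z he hg
  rw [show (fun w => Complex.exp (g w)) = Complex.exp ∘ g from rfl, hcomp]
  simp only [ContinuousLinearMap.coe_comp', Function.comp_apply]
  rw [fderiv_real_of_holo (Complex.differentiable_exp (𝕜 := ℂ) (g z)), Complex.deriv_exp]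

theorem wderiv_exp (hg : DifferentiableAt ℝ g z) :
    wderiv (fun w => Complex.exp (g w)) z = Complex.exp (g z) * wderiv g z := by
  simp [wderiv, fderiv_exp_comp_apply hg]; ring

theorem wderivBar_exp (hg : DifferentiableAt ℝ g z) :
    wderivBar (fun w => Complex.exp (g w)) z = Complex.exp (g z) * wderivBar g z := by
  simp [wderivBar, fderiv_exp_comp_apply hg]; ring

theorem wderiv_pow (n : ℕ) : wderiv (fun w => w ^ n) z = n * z ^ (n - 1) := by
  rw [wderiv_of_holo (differentiableAt_pow n)]
  simp

theorem wderivBar_pow (n : ℕ) : wderivBar (fun w => w ^ n) z = 0 :=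
  wderivBar_of_holo (differentiableAt_pow n)

theorem wderiv_conj_id : wderiv (fun w => (starRingEnd ℂ) w) z = 0 := by
  rw [wderiv_conj differentiableAt_fun_id, wderivBar_id]; simp

theorem wderivBar_conj_id : wderivBar (fun w => (starRingEnd ℂ) w) z = 1 := by
  rw [wderivBar_conj differentiableAt_fun_id, wderiv_id]; simp
end Chain

section Main
variable {ν μ : ℝ} {τ : ℂ → ℂ} {z : ℂ}

theorem ContDiff.dAt {f : ℂ → ℂ} (h : ContDiff ℝ (⊤ : ℕ∞) f) (z : ℂ) :
    DifferentiableAt ℝ f z := h.differentiable (by simp) z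

theorem contDiff_conj_comp {f : ℂ → ℂ} (h : ContDiff ℝ (⊤ : ℕ∞) f) :
    ContDiff ℝ (⊤ : ℕ∞) (fun w => (starRingEnd ℂ) (f w)) :=
  (Complex.conjCLE : ℂ ≃L[ℝ] ℂ).toContinuousLinearMap.contDiff.comp h

theorem contDiff_Sfun (hτ : ContDiff ℝ (⊤ : ℕ∞) τ) :
    ContDiff ℝ (⊤ : ℕ∞) (Sfun ν μ τ) := by
  unfold Sfun
  exact (contDiff_const.mul contDiff_id).add (contDiff_const.mul
    ((hτ.mul (contDiff_wderivBar (contDiff_conj_comp hτ))).sub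
     ((contDiff_conj_comp hτ).mul (contDiff_wderivBar hτ))))

theorem conj_lap {f : ℂ → ℂ} (hf : ContDiff ℝ (⊤ : ℕ∞) f) (z : ℂ) :
    (starRingEnd ℂ) (lap f z) = lap (fun w => (starRingEnd ℂ) (f w)) z := by
  have hWb : ContDiff ℝ (⊤ : ℕ∞) (fun w => wderivBar f w) := contDiff_wderivBar hf
  have h1 : (starRingEnd ℂ) (wderiv (fun w => wderivBar f w) z)
      = wderivBar (fun w => (starRingEnd ℂ) (wderivBar f w)) z := by
    rw [wderivBar_conj (hWb.dAt z)]
  have h2 : (fun w => (starRingEnd ℂ) (wderivBar f w))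
      = fun w => wderiv (fun u => (starRingEnd ℂ) (f u)) w := by
    funext w; rw [wderiv_conj (hf.dAt w)]
  rw [lap, map_mul, h1, h2]
  rw [← wderiv_wderivBar_comm (contDiff_conj_comp hf) z]
  simp [lap, map_ofNat]

theorem wderiv_Sfun (hτ : ContDiff ℝ (⊤ : ℕ∞) τ) (z : ℂ) :
    wderiv (Sfun ν μ τ) z = ((Bfun ν μ τ z : ℝ) : ℂ)
      + ((μ : ℂ) / 4) * (τ z * lap (fun w => (starRingEnd ℂ) (τ w)) z
          - (starRingEnd ℂ) (τ z) * lap τ z) := by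
  have hτc := contDiff_conj_comp hτ
  have d1 : DifferentiableAt ℝ (fun w => (ν : ℂ) * w) z :=
    (differentiableAt_fun_id.const_mul _)
  have dWbc : DifferentiableAt ℝ (fun w => wderivBar (fun u => (starRingEnd ℂ) (τ u)) w) z :=
    (contDiff_wderivBar hτc).dAt z
  have dWb : DifferentiableAt ℝ (fun w => wderivBar τ w) z := (contDiff_wderivBar hτ).dAt z
  have dA : DifferentiableAt ℝ (fun w => τ w * wderivBar (fun u => (starRingEnd ℂ) (τ u)) w) z :=
    (hτ.dAt z).mul dWbc
  have dB : DifferentiableAt ℝ (fun w => (starRingEnd ℂ) (τ w) * wderivBar τ w) z :=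
    ((hτc.dAt z)).mul dWb
  have hS : Sfun ν μ τ = fun w => (ν : ℂ) * w + (μ : ℂ) *
      (τ w * wderivBar (fun u => (starRingEnd ℂ) (τ u)) w
        - (starRingEnd ℂ) (τ w) * wderivBar τ w) := rfl
  rw [hS, wderiv_add d1 ((dA.fun_sub dB).const_mul _),
    wderiv_const_mul ((differentiableAt_fun_id (𝕜 := ℝ) (x := z))) ((ν:ℂ)),
    wderiv_id, wderiv_const_mul (dA.fun_sub dB), wderiv_sub dA dB,
    wderiv_mul (hτ.dAt z) dWbc, wderiv_mul (hτc.dAt z) dWb,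
    wderiv_conj (hτ.dAt z)]
  have e1 : wderivBar (fun u => (starRingEnd ℂ) (τ u)) z = (starRingEnd ℂ) (wderiv τ z) :=
    wderivBar_conj (hτ.dAt z)
  have e2 : wderiv (fun w => wderivBar (fun u => (starRingEnd ℂ) (τ u)) w) z
      = lap (fun u => (starRingEnd ℂ) (τ u)) z / 4 := by rw [lap]; ring
  have e3 : wderiv (fun w => wderivBar τ w) z = lap τ z / 4 := by rw [lap]; ring
  rw [e1, e2, e3]
  have e4 : wderiv τ z * (starRingEnd ℂ) (wderiv τ z)
      = ((‖wderiv τ z‖ ^ 2 : ℝ) : ℂ) := by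
    rw [Complex.mul_conj]; norm_cast; rw [Complex.sq_norm]
  have e5 : (starRingEnd ℂ) (wderivBar τ z) * wderivBar τ z
      = ((‖wderivBar τ z‖ ^ 2 : ℝ) : ℂ) := by
    rw [mul_comm, Complex.mul_conj]; norm_cast; rw [Complex.sq_norm]
  rw [Bfun]
  push_cast [e4, e5]
  ring
end Main

section Keys
variable {ν μ : ℝ} {τ : ℂ → ℂ} {B : ℝ}

theorem sq_abs_cast (x : ℂ) : ((‖x‖ : ℂ)) ^ 2 = x * (starRingEnd ℂ) x := by
  rw [Complex.mul_conj]; norm_cast; rw [Complex.sq_norm]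

theorem contDiff_Atop (hτ : ContDiff ℝ (⊤ : ℕ∞) τ) {f : ℂ → ℂ} (hf : ContDiff ℝ (⊤ : ℕ∞) f) :
    ContDiff ℝ (⊤ : ℕ∞) (fun z => Atop ν μ τ f z) := by
  unfold Atop
  exact (contDiff_wderiv hf).neg.add ((contDiff_conj_comp (contDiff_Sfun hτ)).mul hf)

theorem key1 (hτ : ContDiff ℝ (⊤ : ℕ∞) τ) (hB : ∀ z : ℂ, Bfun ν μ τ z = B)
    {f : ℂ → ℂ} (hf : ContDiff ℝ (⊤ : ℕ∞) f) (z : ℂ) :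
    Lop ν μ τ f z = Atop ν μ τ (fun w => Aop ν μ τ f w) z + (B : ℂ) * f z := by
  have dWbf : DifferentiableAt ℝ (fun w => wderivBar f w) z := (contDiff_wderivBar hf).dAt z
  have dS : DifferentiableAt ℝ (Sfun ν μ τ) z := (contDiff_Sfun hτ).dAt z
  have dSf : DifferentiableAt ℝ (fun w => Sfun ν μ τ w * f w) z := dS.mul (hf.dAt z)
  have hw : wderiv (fun w => wderivBar f w + Sfun ν μ τ w * f w) z
      = wderiv (fun w => wderivBar f w) z
        + (wderiv (Sfun ν μ τ) z * f z + Sfun ν μ τ z * wderiv f z) := by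
    rw [wderiv_add dWbf dSf, wderiv_mul dS (hf.dAt z)]
  have hSd := wderiv_Sfun (ν := ν) (μ := μ) hτ z
  rw [hB z] at hSd
  simp only [Lop, Atop, Aop]
  rw [hw, hSd, sq_abs_cast]
  ring

theorem hcc_aux (hτ : ContDiff ℝ (⊤ : ℕ∞) τ) (hB : ∀ z : ℂ, Bfun ν μ τ z = B) (z : ℂ) :
    (starRingEnd ℂ) (wderiv (Sfun ν μ τ) z)
      = 2 * (B : ℂ) - wderiv (Sfun ν μ τ) z := by
  have hSd := wderiv_Sfun (ν := ν) (μ := μ) hτ z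
  rw [hB z] at hSd
  have hl1 : (starRingEnd ℂ) (lap τ z) = lap (fun w => (starRingEnd ℂ) (τ w)) z :=
    conj_lap hτ z
  have hl2 : (starRingEnd ℂ) (lap (fun w => (starRingEnd ℂ) (τ w)) z) = lap τ z := by
    rw [← hl1, Complex.conj_conj]
  rw [hSd, map_add, map_mul, map_sub, map_mul, map_mul, hl1, hl2, Complex.conj_conj,
    map_div₀, Complex.conj_ofReal, Complex.conj_ofReal, map_ofNat]
  ring

theorem key2 (hτ : ContDiff ℝ (⊤ : ℕ∞) τ) (hB : ∀ z : ℂ, Bfun ν μ τ z = B)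
    {f : ℂ → ℂ} (hf : ContDiff ℝ (⊤ : ℕ∞) f) (z : ℂ) :
    Aop ν μ τ (fun w => Atop ν μ τ f w) z
      = Atop ν μ τ (fun w => Aop ν μ τ f w) z + 2 * (B : ℂ) * f z := by
  have dWf : DifferentiableAt ℝ (fun w => wderiv f w) z := (contDiff_wderiv hf).dAt z
  have dWbf : DifferentiableAt ℝ (fun w => wderivBar f w) z := (contDiff_wderivBar hf).dAt z
  have dS : DifferentiableAt ℝ (Sfun ν μ τ) z := (contDiff_Sfun hτ).dAt z
  have dSc : DifferentiableAt ℝ (fun w => (starRingEnd ℂ) (Sfun ν μ τ w)) z :=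
    (contDiff_conj_comp (contDiff_Sfun hτ)).dAt z
  have dSf : DifferentiableAt ℝ (fun w => Sfun ν μ τ w * f w) z := dS.mul (hf.dAt z)
  have dScf : DifferentiableAt ℝ (fun w => (starRingEnd ℂ) (Sfun ν μ τ w) * f w) z :=
    dSc.mul (hf.dAt z)
  have hwb : wderivBar (fun w => -wderiv f w + (starRingEnd ℂ) (Sfun ν μ τ w) * f w) z
      = -wderivBar (fun w => wderiv f w) z
        + ((starRingEnd ℂ) (wderiv (Sfun ν μ τ) z) * f z
            + (starRingEnd ℂ) (Sfun ν μ τ z) * wderivBar f z) := by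
    rw [wderivBar_add dWf.fun_neg dScf, wderivBar_mul dSc (hf.dAt z), wderivBar_conj dS]
    have hneg : wderivBar (fun w => -wderiv f w) z = -wderivBar (fun w => wderiv f w) z := by
      have := wderivBar_const_mul (f := fun w => wderiv f w) (z := z) dWf (-1)
      simpa using this
    rw [hneg]
  have hw : wderiv (fun w => wderivBar f w + Sfun ν μ τ w * f w) z
      = wderiv (fun w => wderivBar f w) z
        + (wderiv (Sfun ν μ τ) z * f z + Sfun ν μ τ z * wderiv f z) := by
    rw [wderiv_add dWbf dSf, wderiv_mul dS (hf.dAt z)]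
  have hschwarz : wderivBar (fun w => wderiv f w) z = wderiv (fun w => wderivBar f w) z :=
    (wderiv_wderivBar_comm hf z).symm
  simp only [Aop, Atop]
  rw [hwb, hw, hschwarz, hcc_aux hτ hB z]
  ring
end Keys

section Ground
variable {ν μ B : ℝ} {τ : ℂ → ℂ} {φ : ℂ → ℝ} {n : ℕ}

theorem psi_smooth (hφs : ContDiff ℝ (⊤ : ℕ∞) φ) :
    ContDiff ℝ (⊤ : ℕ∞) (fun w => w ^ n *
      Complex.exp (-((B * ‖w‖ ^ 2 : ℝ) : ℂ) - Complex.I * (φ w : ℂ))) := by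
  have hφc : ContDiff ℝ (⊤ : ℕ∞) (fun w => ((φ w : ℂ))) :=
    Complex.ofRealCLM.contDiff.comp hφs
  have habs : (fun w : ℂ => -((B * ‖w‖ ^ 2 : ℝ) : ℂ) - Complex.I * (φ w : ℂ))
      = fun w => -((B : ℂ) * (w * (starRingEnd ℂ) w)) - Complex.I * (φ w : ℂ) := by
    funext w
    congr 2
    push_cast [Complex.mul_conj, Complex.sq_norm]
    ring
  rw [show (fun w : ℂ => w ^ n *
      Complex.exp (-((B * ‖w‖ ^ 2 : ℝ) : ℂ) - Complex.I * (φ w : ℂ)))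
      = fun w => w ^ n * Complex.exp (-((B : ℂ) * (w * (starRingEnd ℂ) w))
          - Complex.I * (φ w : ℂ)) by
    funext w
    rw [show (-((B * ‖w‖ ^ 2 : ℝ) : ℂ) - Complex.I * (φ w : ℂ))
        = (-((B : ℂ) * (w * (starRingEnd ℂ) w)) - Complex.I * (φ w : ℂ)) from congrFun habs w]]
  exact (contDiff_id.pow n).mul
    (((((contDiff_const.mul (contDiff_id.mul (contDiff_conj_comp contDiff_id))).neg).sub
      (contDiff_const.mul hφc))).cexp)

theorem ground (hτ : ContDiff ℝ (⊤ : ℕ∞) τ) (hφs : ContDiff ℝ (⊤ : ℕ∞) φ)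
    (hφ : ∀ z : ℂ, wderivBar (fun w => (φ w : ℂ)) z
      = -Complex.I * (Sfun ν μ τ z - (B : ℂ) * z)) (z : ℂ) :
    Aop ν μ τ (fun w => w ^ n *
      Complex.exp (-((B * ‖w‖ ^ 2 : ℝ) : ℂ) - Complex.I * (φ w : ℂ))) z = 0 := by
  have hφc : ContDiff ℝ (⊤ : ℕ∞) (fun w => ((φ w : ℂ))) :=
    Complex.ofRealCLM.contDiff.comp hφs
  have habs : (fun w : ℂ => -((B * ‖w‖ ^ 2 : ℝ) : ℂ) - Complex.I * (φ w : ℂ))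
      = fun w => -((B : ℂ) * (w * (starRingEnd ℂ) w)) - Complex.I * (φ w : ℂ) := by
    funext w
    congr 2
    push_cast [Complex.mul_conj, Complex.sq_norm]
    ring
  have hgc : ContDiff ℝ (⊤ : ℕ∞)
      (fun w : ℂ => -((B : ℂ) * (w * (starRingEnd ℂ) w)) - Complex.I * (φ w : ℂ)) :=
    ((contDiff_const.mul (contDiff_id.mul (contDiff_conj_comp contDiff_id))).neg).sub
      (contDiff_const.mul hφc)
  have hψeq : (fun w : ℂ => w ^ n *
      Complex.exp (-((B * ‖w‖ ^ 2 : ℝ) : ℂ) - Complex.I * (φ w : ℂ)))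
      = fun w => w ^ n * Complex.exp (-((B : ℂ) * (w * (starRingEnd ℂ) w))
          - Complex.I * (φ w : ℂ)) := by
    funext w; rw [congrFun habs w]
  -- derivative of the exponent
  have dmc : DifferentiableAt ℝ (fun w : ℂ => (B : ℂ) * (w * (starRingEnd ℂ) w)) z :=
    ((differentiableAt_fun_id.mul ((contDiff_conj_comp contDiff_id).dAt z)).const_mul _)
  have dφ : DifferentiableAt ℝ (fun w : ℂ => Complex.I * (φ w : ℂ)) z :=
    (hφc.dAt z).const_mul _
  have hwbg : wderivBar (fun w : ℂ => -((B : ℂ) * (w * (starRingEnd ℂ) w))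
      - Complex.I * (φ w : ℂ)) z = -Sfun ν μ τ z := by
    have dconj : DifferentiableAt ℝ (fun w : ℂ => (starRingEnd ℂ) w) z :=
      (Complex.conjCLE : ℂ ≃L[ℝ] ℂ).differentiable.differentiableAt.restrictScalars ℝ
    have h1 : wderivBar (fun w : ℂ => w * (starRingEnd ℂ) w) z = z := by
      rw [wderivBar_mul differentiableAt_fun_id dconj, wderivBar_id, wderivBar_conj_id]
      ring
    have hneg : wderivBar (fun w : ℂ => -((B : ℂ) * (w * (starRingEnd ℂ) w))) z
        = -((B : ℂ) * z) := by
      have := wderivBar_const_mul (f := fun w : ℂ => w * (starRingEnd ℂ) w) (z := z)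
        (differentiableAt_fun_id.mul ((contDiff_conj_comp contDiff_id).dAt z)) (-(B : ℂ))
      simpa [h1] using this
    rw [wderivBar_sub dmc.fun_neg dφ, hneg,
      wderivBar_const_mul (hφc.dAt z) Complex.I, hφ z]
    have : Complex.I * (-Complex.I * (Sfun ν μ τ z - (B : ℂ) * z))
        = Sfun ν μ τ z - (B : ℂ) * z := by
      rw [show Complex.I * (-Complex.I * (Sfun ν μ τ z - (B : ℂ) * z))
          = -(Complex.I * Complex.I) * (Sfun ν μ τ z - (B : ℂ) * z) by ring,
        Complex.I_mul_I]
      ring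
    rw [this]; ring
  have hargz : (-((B * ‖z‖ ^ 2 : ℝ) : ℂ) - Complex.I * (φ z : ℂ))
      = -((B : ℂ) * (z * (starRingEnd ℂ) z)) - Complex.I * (φ z : ℂ) := by
    congr 2
    push_cast [Complex.mul_conj, Complex.sq_norm]
    ring
  simp only [Aop]
  rw [hψeq, hargz]
  have dpow : DifferentiableAt ℝ (fun w : ℂ => w ^ n) z :=
    (differentiableAt_pow (𝕜 := ℂ) n).restrictScalars ℝ
  have dexp : DifferentiableAt ℝ (fun w : ℂ =>
      Complex.exp (-((B : ℂ) * (w * (starRingEnd ℂ) w)) - Complex.I * (φ w : ℂ))) z :=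
    (hgc.cexp.dAt z)
  rw [wderivBar_mul dpow dexp, wderivBar_pow, wderivBar_exp (hgc.dAt z), hwbg]
  ring
end Ground

section Final
variable {ν μ B : ℝ} {τ : ℂ → ℂ} {φ : ℂ → ℝ} {n : ℕ}

def psiF (B : ℝ) (φ : ℂ → ℝ) (n : ℕ) : ℂ → ℂ := fun w =>
  w ^ n * Complex.exp (-((B * ‖w‖ ^ 2 : ℝ) : ℂ) - Complex.I * (φ w : ℂ))

theorem AtopIter_succ (ν μ : ℝ) (τ : ℂ → ℂ) (m : ℕ) (f : ℂ → ℂ) :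
    AtopIter ν μ τ (m + 1) f = fun z => Atop ν μ τ (AtopIter ν μ τ m f) z := by
  rw [AtopIter, Function.iterate_succ_apply', ← AtopIter]

theorem Atop_const_mul (c : ℂ) {h : ℂ → ℂ} {z : ℂ} (dh : DifferentiableAt ℝ h z) :
    Atop ν μ τ (fun w => c * h w) z = c * Atop ν μ τ h z := by
  simp only [Atop, wderiv_const_mul dh c]; ring

theorem iter_smooth (hτ : ContDiff ℝ (⊤ : ℕ∞) τ) (hφs : ContDiff ℝ (⊤ : ℕ∞) φ) (m : ℕ) :
    ContDiff ℝ (⊤ : ℕ∞) (AtopIter ν μ τ m (psiF B φ n)) := by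
  induction m with
  | zero => exact psi_smooth hφs
  | succ m ih => rw [AtopIter_succ]; exact contDiff_Atop hτ ih

theorem coeff_shift (hτ : ContDiff ℝ (⊤ : ℕ∞) τ) (hφs : ContDiff ℝ (⊤ : ℕ∞) φ)
    (c : ℝ) (m : ℕ) (z : ℂ) (hc : m = 0 → c = 0) :
    (c : ℂ) * Atop ν μ τ (AtopIter ν μ τ (m - 1) (psiF B φ n)) z
      = (c : ℂ) * AtopIter ν μ τ m (psiF B φ n) z := by
  cases m with
  | zero => rw [hc rfl]; simp
  | succ m => rw [Nat.succ_sub_one, AtopIter_succ]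

theorem iter_Aop (hτ : ContDiff ℝ (⊤ : ℕ∞) τ) (hB : ∀ z : ℂ, Bfun ν μ τ z = B)
    (hφs : ContDiff ℝ (⊤ : ℕ∞) φ)
    (hφ : ∀ z : ℂ, wderivBar (fun w => (φ w : ℂ)) z
      = -Complex.I * (Sfun ν μ τ z - (B : ℂ) * z)) (m : ℕ) (z : ℂ) :
    Aop ν μ τ (AtopIter ν μ τ m (psiF B φ n)) z
      = ((2 * (m : ℝ) * B : ℝ) : ℂ) * AtopIter ν μ τ (m - 1) (psiF B φ n) z := by
  induction m generalizing z with
  | zero =>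
    have h0 : AtopIter ν μ τ 0 (psiF B φ n) = psiF B φ n := rfl
    rw [h0]
    have := ground (ν := ν) (μ := μ) (B := B) (n := n) hτ hφs hφ z
    rw [show Aop ν μ τ (psiF B φ n) z = Aop ν μ τ (fun w => w ^ n *
      Complex.exp (-((B * ‖w‖ ^ 2 : ℝ) : ℂ) - Complex.I * (φ w : ℂ))) z from rfl,
      this]
    norm_num
  | succ m ih =>
    rw [AtopIter_succ]
    rw [show Aop ν μ τ (fun z => Atop ν μ τ (AtopIter ν μ τ m (psiF B φ n)) z) z
        = Aop ν μ τ (fun w => Atop ν μ τ (AtopIter ν μ τ m (psiF B φ n)) w) z from rfl,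
      key2 hτ hB (iter_smooth hτ hφs m) z]
    have hfun : (fun w => Aop ν μ τ (AtopIter ν μ τ m (psiF B φ n)) w)
        = fun w => ((2 * (m : ℝ) * B : ℝ) : ℂ) * AtopIter ν μ τ (m - 1) (psiF B φ n) w :=
      funext (fun w => ih w)
    rw [hfun, Atop_const_mul _ ((iter_smooth (B := B) (n := n) hτ hφs (m - 1)).dAt z),
      coeff_shift hτ hφs _ m z (fun h => by rw [h]; norm_num)]
    push_cast
    ring
end Final



theorem statement19 (ν μ : ℝ) (hν : 0 < ν) (hμ : 0 < μ) (τ : ℂ → ℂ) (hτ : ContDiff ℝ (⊤ : ℕ∞) τ)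
    (B : ℝ) (hB : ∀ z : ℂ, Bfun ν μ τ z = B)
    (φ : ℂ → ℝ) (hφs : ContDiff ℝ (⊤ : ℕ∞) φ) (hφ0 : φ 0 = 0)
    (hφ : ∀ z : ℂ, wderivBar (fun w => (φ w : ℂ)) z = -Complex.I * (Sfun ν μ τ z - (B : ℂ) * z))
    (m n : ℕ) (z : ℂ) :
    Lop ν μ τ (AtopIter ν μ τ m (fun w => w ^ n * Complex.exp (-((B * ‖w‖ ^ 2 : ℝ) : ℂ) - Complex.I * (φ w : ℂ)))) z
      = ((B * (2 * (m : ℝ) + 1) : ℝ) : ℂ) * AtopIter ν μ τ m (fun w => w ^ n * Complex.exp (-((B * ‖w‖ ^ 2 : ℝ) : ℂ) - Complex.I * (φ w : ℂ))) z := by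
  have hψ : (fun w : ℂ => w ^ n * Complex.exp (-((B * ‖w‖ ^ 2 : ℝ) : ℂ)
      - Complex.I * (φ w : ℂ))) = psiF B φ n := rfl
  rw [hψ]
  rw [key1 hτ hB (iter_smooth (B := B) (n := n) hτ hφs m) z]
  have hfun : (fun w => Aop ν μ τ (AtopIter ν μ τ m (psiF B φ n)) w)
      = fun w => ((2 * (m : ℝ) * B : ℝ) : ℂ) * AtopIter ν μ τ (m - 1) (psiF B φ n) w :=
    funext (fun w => iter_Aop hτ hB hφs hφ m w)
  rw [hfun, Atop_const_mul _ ((iter_smooth (B := B) (n := n) hτ hφs (m - 1)).dAt z),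
    coeff_shift hτ hφs _ m z (fun h => by rw [h]; norm_num)]
  push_cast
  ring
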